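/- arXiv:2012.01252 — 2 statements merged into one kernel-verified Lean document; each statement's English description precedes it below -/
import Mathlib

section
/- The KL projection of a matrix γ with strictly positive entries onto the set C₁ = {T ∈ ℝ^{n×m}_{≥0} : T1 ≤ μ} (row sums bounded by a positive vector μ) is given by Diag(min(μ/(γ1), 1)) γ, where division and minimum are taken entrywise. -/
open Finset

lemma aux_pt (t c g : ℝ) (ht : 0 ≤ t) (hc : 0 < c) (hg : 0 < g) :
    t * Real.log c - c * g ≤ t * Real.log (t / g) - t := by
  rcases eq_or_lt_of_le ht with h | h
  · simp only [← h, zero_mul, zero_sub, sub_zero, zero_div]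
    nlinarith [mul_pos hc hg]
  · have h1 : Real.log (c * g / t) ≤ c * g / t - 1 :=
      Real.log_le_sub_one_of_pos (by positivity)
    have h2 : Real.log (c * g / t) = Real.log c + Real.log g - Real.log t := by
      rw [Real.log_div (by positivity) h.ne', Real.log_mul hc.ne' hg.ne']
    have h3 : Real.log (t / g) = Real.log t - Real.log g := Real.log_div h.ne' hg.ne'
    rw [h2] at h1
    have h5 := mul_le_mul_of_nonneg_left h1 h.le
    have h6 : t * (c * g / t - 1) = c * g - t := by field_simp
    rw [h6] at h5
    rw [h3]
    nlinarith [h5]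

lemma row_lem {m : ℕ} (g t : Fin m → ℝ) (μ : ℝ) (hg : ∀ j, 0 < g j)
    (hμ : 0 < μ) (ht : ∀ j, 0 ≤ t j) (hsum : ∑ j, t j ≤ μ) :
    ∑ j, (min (μ / ∑ k, g k) 1 * g j * Real.log (min (μ / ∑ k, g k) 1 * g j / g j)
        - min (μ / ∑ k, g k) 1 * g j + g j)
      ≤ ∑ j, (t j * Real.log (t j / g j) - t j + g j) := by
  rcases isEmpty_or_nonempty (Fin m) with hm | hm
  · simp
  · set s := ∑ k, g k with hsdef
    have hs : 0 < s := Finset.sum_pos (fun j _ => hg j) Finset.univ_nonempty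
    set c := min (μ / s) 1 with hcdef
    have hc0 : 0 < c := lt_min (by positivity) one_pos
    have hc1 : c ≤ 1 := min_le_right _ _
    have step1 : ∑ j, (t j * Real.log c - c * g j + g j)
        ≤ ∑ j, (t j * Real.log (t j / g j) - t j + g j) := by
      apply Finset.sum_le_sum
      intro j _
      have := aux_pt (t j) c (g j) (ht j) hc0 (hg j)
      linarith
    have e1 : ∑ j, (c * g j * Real.log (c * g j / g j) - c * g j + g j)
        = (Real.log c * c - c + 1) * s := by
      rw [hsdef, Finset.mul_sum]
      apply Finset.sum_congr rfl
      intro j _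
      rw [mul_div_assoc, div_self (hg j).ne', mul_one]
      ring
    have e2 : ∑ j, (t j * Real.log c - c * g j + g j)
        = (∑ j, t j) * Real.log c + (1 - c) * s := by
      rw [hsdef, Finset.sum_mul, Finset.mul_sum, ← Finset.sum_add_distrib]
      apply Finset.sum_congr rfl
      intro j _
      ring
    have key : (Real.log c * c - c + 1) * s ≤ (∑ j, t j) * Real.log c + (1 - c) * s := by
      rcases le_or_gt 1 (μ / s) with hcase | hcase
      · have : c = 1 := min_eq_right hcase
        simp [this]
      · have hceq : c = μ / s := min_eq_left hcase.le
        have hcs : c * s = μ := by rw [hceq]; field_simp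
        have hlog : Real.log c ≤ 0 := Real.log_nonpos hc0.le hc1
        have hT : ∑ j, t j ≤ c * s := by rw [hcs]; exact hsum
        nlinarith [mul_le_mul_of_nonpos_left hT hlog]
    calc ∑ j, (c * g j * Real.log (c * g j / g j) - c * g j + g j)
        = (Real.log c * c - c + 1) * s := e1
      _ ≤ (∑ j, t j) * Real.log c + (1 - c) * s := key
      _ = ∑ j, (t j * Real.log c - c * g j + g j) := e2.symm
      _ ≤ _ := step1

noncomputable def klDiv {n m : ℕ} (T S : Matrix (Fin n) (Fin m) ℝ) : ℝ :=
  ∑ i, ∑ j, (T i j * Real.log (T i j / S i j) - T i j + S i j)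

theorem stmt_1 {n m : ℕ} (γ : Matrix (Fin n) (Fin m) ℝ) (μ : Fin n → ℝ)
    (hγ : ∀ i j, 0 < γ i j) (hμ : ∀ i, 0 < μ i) :
    let C₁ : Set (Matrix (Fin n) (Fin m) ℝ) :=
      {T | (∀ i j, 0 ≤ T i j) ∧ ∀ i, ∑ j, T i j ≤ μ i}
    let P : Matrix (Fin n) (Fin m) ℝ :=
      fun i j => min (μ i / ∑ k, γ i k) 1 * γ i j
    P ∈ C₁ ∧ ∀ T ∈ C₁, klDiv P γ ≤ klDiv T γ := by
  intro C₁ P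
  have hs0 : ∀ i, 0 ≤ ∑ k, γ i k := fun i =>
    Finset.sum_nonneg fun k _ => (hγ i k).le
  have hc0 : ∀ i, 0 ≤ min (μ i / ∑ k, γ i k) 1 := fun i =>
    le_min (div_nonneg (hμ i).le (hs0 i)) zero_le_one
  constructor
  · constructor
    · intro i j
      exact mul_nonneg (hc0 i) (hγ i j).le
    · intro i
      have : ∑ j, P i j = min (μ i / ∑ k, γ i k) 1 * ∑ k, γ i k := by
        rw [Finset.mul_sum]
      rw [this]
      rcases (hs0 i).eq_or_lt' with h | h
      · rw [h, mul_zero]; exact (hμ i).le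
      · calc min (μ i / ∑ k, γ i k) 1 * ∑ k, γ i k
            ≤ (μ i / ∑ k, γ i k) * ∑ k, γ i k :=
              mul_le_mul_of_nonneg_right (min_le_left _ _) (hs0 i)
          _ = μ i := by field_simp
  · rintro T ⟨hT0, hTsum⟩
    apply Finset.sum_le_sum
    intro i _
    exact row_lem (γ i) (T i) (μ i) (hγ i) (hμ i) (hT0 i) (hTsum i)
end

section
/- The KL projection of a matrix γ with strictly positive entries onto the set C₂ = {T ∈ ℝ^{n×m}_{≥0} : Tᵀ1 ≤ ν} (column sums bounded by a positive vector ν) is γ Diag(min(ν/(γᵀ1), 1)), where division and minimum are entrywise. -/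
open Finset

lemma aux_xlog (x c : ℝ) (hx : 0 ≤ x) (hc : 0 < c) :
    x - c ≤ x * Real.log (x / c) := by
  rcases eq_or_lt_of_le hx with h | h
  · simp [← h]; linarith
  · have hl := Real.log_le_sub_one_of_pos (show 0 < c / x from div_pos hc h)
    have hmul : x * Real.log (c / x) ≤ x * (c / x - 1) :=
      mul_le_mul_of_nonneg_left hl h.le
    have heq : x * (c / x - 1) = c - x := by field_simp
    have hneg : Real.log (x / c) = - Real.log (c / x) := by
      rw [← Real.log_inv, inv_div]
    rw [hneg]; nlinarith

lemma col_lemma {n : ℕ} (g t : Fin n → ℝ) (ν : ℝ) (hg : ∀ i, 0 < g i) (hν : 0 < ν)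
    (ht : ∀ i, 0 ≤ t i) (hts : ∑ i, t i ≤ ν) :
    ∑ i, (g i * min (ν / ∑ k, g k) 1 * Real.log (g i * min (ν / ∑ k, g k) 1 / g i)
      - g i * min (ν / ∑ k, g k) 1 + g i)
    ≤ ∑ i, (t i * Real.log (t i / g i) - t i + g i) := by
  cases isEmpty_or_nonempty (Fin n) with
  | inl h => simp
  | inr h =>
    set s := ∑ k, g k with hs_def
    have hs : 0 < s := Finset.sum_pos (fun i _ => hg i) Finset.univ_nonempty
    set α := min (ν / s) 1 with hα_def
    have hα0 : 0 < α := lt_min (div_pos hν hs) one_pos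
    have hα1 : α ≤ 1 := min_le_right _ _
    have hlog : ∀ i, Real.log (g i * α / g i) = Real.log α := by
      intro i
      rw [mul_comm, mul_div_assoc, div_self (hg i).ne', mul_one]
    have key : ∀ i, t i - g i * α + t i * Real.log α ≤ t i * Real.log (t i / g i) := by
      intro i
      have haux := aux_xlog (t i) (g i * α) (ht i) (mul_pos (hg i) hα0)
      rcases eq_or_lt_of_le (ht i) with h0 | h0
      · simp [← h0]
        nlinarith [mul_pos (hg i) hα0]
      · have : Real.log (t i / (g i * α)) = Real.log (t i / g i) - Real.log α := by
          rw [div_mul_eq_div_div, Real.log_div (div_pos h0 (hg i)).ne' hα0.ne']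
        rw [this] at haux
        nlinarith
    have hsum : ∑ i, (t i - g i * α + t i * Real.log α)
        ≤ ∑ i, t i * Real.log (t i / g i) :=
      Finset.sum_le_sum fun i _ => key i
    have hexp1 : ∑ i, (t i - g i * α + t i * Real.log α)
        = (∑ i, t i) - s * α + (∑ i, t i) * Real.log α := by
      simp only [Finset.sum_add_distrib, Finset.sum_sub_distrib, ← Finset.sum_mul]
      rfl
    have hcorr : 0 ≤ Real.log α * ((∑ i, t i) - s * α) := by
      rcases le_or_gt 1 (ν / s) with hcase | hcase
      · have : α = 1 := min_eq_right hcase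
        simp [this]
      · have hαval : α = ν / s := min_eq_left hcase.le
        have hsα : s * α = ν := by rw [hαval]; field_simp
        have hlogα : Real.log α ≤ 0 := Real.log_nonpos hα0.le hα1
        have h2 : (∑ i, t i) - s * α ≤ 0 := by rw [hsα]; linarith
        nlinarith [mul_nonneg (neg_nonneg.2 hlogα) (neg_nonneg.2 h2)]
    calc ∑ i, (g i * α * Real.log (g i * α / g i) - g i * α + g i)
        = ∑ i, (g i * α * Real.log α - g i * α + g i) :=
          Finset.sum_congr rfl fun i _ => by rw [hlog i]
      _ = s * α * Real.log α - s * α + s := by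
          simp only [Finset.sum_add_distrib, Finset.sum_sub_distrib, ← Finset.sum_mul]
          rfl
      _ ≤ ∑ i, (t i * Real.log (t i / g i) - t i + g i) := by
          simp only [Finset.sum_add_distrib, Finset.sum_sub_distrib]
          rw [hexp1] at hsum
          nlinarith [hsum, hcorr]

theorem stmt_2 {n m : ℕ} (γ : Matrix (Fin n) (Fin m) ℝ) (ν : Fin m → ℝ)
    (hγ : ∀ i j, 0 < γ i j) (hν : ∀ j, 0 < ν j) :
    let C₂ : Set (Matrix (Fin n) (Fin m) ℝ) :=
      {T | (∀ i j, 0 ≤ T i j) ∧ ∀ j, ∑ i, T i j ≤ ν j}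
    let P : Matrix (Fin n) (Fin m) ℝ :=
      fun i j => γ i j * min (ν j / ∑ k, γ k j) 1
    P ∈ C₂ ∧ ∀ T ∈ C₂, klDiv P γ ≤ klDiv T γ := by
  intro C₂ P
  constructor
  · constructor
    · intro i j
      have hs : 0 ≤ ∑ k, γ k j := Finset.sum_nonneg fun k _ => (hγ k j).le
      have : 0 ≤ min (ν j / ∑ k, γ k j) 1 :=
        le_min (div_nonneg (hν j).le hs) zero_le_one
      exact mul_nonneg (hγ i j).le this
    · intro j
      show ∑ i, γ i j * min (ν j / ∑ k, γ k j) 1 ≤ ν j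
      rw [← Finset.sum_mul]
      rcases eq_or_lt_of_le (Finset.sum_nonneg fun k (_ : k ∈ Finset.univ) => (hγ k j).le)
        with h0 | h0
      · rw [← h0, zero_mul]; exact (hν j).le
      · calc (∑ i, γ i j) * min (ν j / ∑ k, γ k j) 1
            ≤ (∑ i, γ i j) * (ν j / ∑ k, γ k j) :=
              mul_le_mul_of_nonneg_left (min_le_left _ _) h0.le
          _ = ν j := by field_simp
  · intro T hT
    unfold klDiv
    rw [Finset.sum_comm, Finset.sum_comm (f := fun i j =>
      T i j * Real.log (T i j / γ i j) - T i j + γ i j)]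
    refine Finset.sum_le_sum fun j _ => ?_
    exact col_lemma (fun i => γ i j) (fun i => T i j) (ν j)
      (fun i => hγ i j) (hν j) (fun i => hT.1 i j) (hT.2 j)
end
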